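/- Let F₂ = ⟨x, y⟩ be the free group on two generators. For n ≥ 1, define w_n = y(xy)^{n+1}, g = [x,y], and g_n = (W_n^{-1} g W_n) g^{-2} where W_n = w_n^{-1} g w_n. Then the reduced cyclic word of g_n determines n; in particular g_n and g_m are conjugate in F₂ if and only if n = m. -/

import Mathlib

open Matrix

abbrev SL2' := Matrix.SpecialLinearGroup (Fin 2) ℤ

def Am : SL2' := ⟨!![-1,-1;1,0], by norm_num [Matrix.det_fin_two_of]⟩
def Bm : SL2' := ⟨!![-1,0;-1,-1], by norm_num [Matrix.det_fin_two_of]⟩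
def Am' : SL2' := ⟨!![0,1;-1,-1], by norm_num [Matrix.det_fin_two_of]⟩
def Bm' : SL2' := ⟨!![-1,0;1,-1], by norm_num [Matrix.det_fin_two_of]⟩
def Cm (k : ℤ) : SL2' := ⟨!![1+k,k;-k,1-k], by simp [Matrix.det_fin_two_of]; ring⟩

lemma SL2'_ext (u v : SL2') (h : (u : Matrix (Fin 2) (Fin 2) ℤ) = v) : u = v := Subtype.ext h

@[simp] lemma Am_inv : Am⁻¹ = Am' := by
  apply inv_eq_of_mul_eq_one_right
  apply SL2'_ext
  rw [Matrix.SpecialLinearGroup.coe_mul]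
  simp [Am, Am', Matrix.mul_fin_two, Matrix.one_fin_two]

@[simp] lemma Bm_inv : Bm⁻¹ = Bm' := by
  apply inv_eq_of_mul_eq_one_right
  apply SL2'_ext
  rw [Matrix.SpecialLinearGroup.coe_mul]
  simp [Bm, Bm', Matrix.mul_fin_two, Matrix.one_fin_two]

@[simp] lemma Cm_inv (k : ℤ) : (Cm k)⁻¹ = Cm (-k) := by
  apply inv_eq_of_mul_eq_one_right
  apply SL2'_ext
  rw [Matrix.SpecialLinearGroup.coe_mul]
  simp [Cm, Matrix.mul_fin_two, Matrix.one_fin_two]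
  ring_nf
  trivial

lemma AB_pow (k : ℕ) : (Am * Bm) ^ k = Cm k := by
  induction k with
  | zero => apply SL2'_ext; simp [Cm, Matrix.one_fin_two]
  | succ j ih =>
    rw [pow_succ, ih]
    apply SL2'_ext
    rw [Matrix.SpecialLinearGroup.coe_mul, Matrix.SpecialLinearGroup.coe_mul]
    show (Cm j : Matrix (Fin 2) (Fin 2) ℤ) * ((Am : Matrix (Fin 2) (Fin 2) ℤ) * Bm) = Cm (j+1)
    simp [Cm, Am, Bm, Matrix.mul_fin_two]
    ring_nf
    trivial

def rep : FreeGroup Bool →* SL2' := FreeGroup.lift (fun b => if b then Am else Bm)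

@[simp] lemma rep_x : rep (FreeGroup.of true) = Am := by simp [rep]
@[simp] lemma rep_y : rep (FreeGroup.of false) = Bm := by simp [rep]

def tr (u : SL2') : ℤ := Matrix.trace (u : Matrix (Fin 2) (Fin 2) ℤ)

lemma tr_conj {u v : SL2'} (h : IsConj u v) : tr u = tr v := by
  obtain ⟨c, hc⟩ := isConj_iff.mp h
  rw [← hc]
  simp only [tr, Matrix.SpecialLinearGroup.coe_mul]
  rw [Matrix.trace_mul_comm, ← Matrix.mul_assoc, ← Matrix.SpecialLinearGroup.coe_mul,
    inv_mul_cancel]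
  simp

def ggF (k : ℕ) : FreeGroup Bool :=
  let x : FreeGroup Bool := FreeGroup.of true
  let y : FreeGroup Bool := FreeGroup.of false
  let g := x⁻¹ * y⁻¹ * x * y
  let w := y * (x * y) ^ (k + 1)
  let W := w⁻¹ * g * w
  W⁻¹ * g * W * g⁻¹ * g⁻¹

lemma tr_ggF (k : ℕ) :
    tr (rep (ggF k)) = 3*(k:ℤ)^4 + 36*(k:ℤ)^3 + 147*(k:ℤ)^2 + 234*(k:ℤ) + 111 := by
  simp only [ggF, _root_.map_mul, map_inv, map_pow, rep_x, rep_y, _root_.mul_inv_rev, inv_inv,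
    AB_pow, Am_inv, Bm_inv, Cm_inv, tr, Matrix.SpecialLinearGroup.coe_mul]
  simp only [Am, Am', Bm, Bm', Cm]
  norm_num [Matrix.mul_fin_two, Matrix.trace_fin_two_of]
  ring

lemma poly_inj : Function.Injective
    (fun k : ℕ => 3*(k:ℤ)^4 + 36*(k:ℤ)^3 + 147*(k:ℤ)^2 + 234*(k:ℤ) + 111) := by
  have hmono : StrictMono
      (fun k : ℕ => 3*(k:ℤ)^4 + 36*(k:ℤ)^3 + 147*(k:ℤ)^2 + 234*(k:ℤ) + 111) := by
    apply strictMono_nat_of_lt_succ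
    intro k
    have h0 : (0:ℤ) ≤ (k:ℤ) := Int.natCast_nonneg k
    push_cast
    nlinarith [sq_nonneg (k:ℤ)]
  exact hmono.injective

/-- In the free group `F₂ = ⟨x, y⟩`, with `g = [x,y] = x⁻¹y⁻¹xy`, `w_n = y(xy)^{n+1}`,
`W_n = w_n⁻¹ g w_n` and `g_n = W_n⁻¹ g W_n g⁻²`, the elements `g_m` and `g_n` are
conjugate iff `m = n`. -/
theorem stmt16 (m n : ℕ) (hm : 1 ≤ m) (hn : 1 ≤ n) :
    let x : FreeGroup Bool := FreeGroup.of true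
    let y : FreeGroup Bool := FreeGroup.of false
    let g := x⁻¹ * y⁻¹ * x * y
    let w : ℕ → FreeGroup Bool := fun k => y * (x * y) ^ (k + 1)
    let W : ℕ → FreeGroup Bool := fun k => (w k)⁻¹ * g * (w k)
    let gg : ℕ → FreeGroup Bool := fun k => (W k)⁻¹ * g * (W k) * g⁻¹ * g⁻¹
    (IsConj (gg m) (gg n) ↔ m = n) := by
  dsimp only
  constructor
  · intro h
    have h2 : IsConj (rep (ggF m)) (rep (ggF n)) := rep.map_isConj h
    have ht := tr_conj h2
    rw [tr_ggF, tr_ggF] at ht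
    exact poly_inj ht
  · rintro rfl
    exact IsConj.refl _
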